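/- Let C be a category with finite limits that has small coproducts and coequalizers of equivalence relations, such that equivalence relations are effective, effective epimorphisms are stable under pullback, and coproducts are disjoint and universal (i.e., C is an infinitary pretopos). Then C has all small colimits. -/

import Mathlib

open CategoryTheory CategoryTheory.Limits

universe v u

/-- The Mathlib (Dec 2024) notion of a disjoint binary coproduct, no longer in Mathlib. -/
class CoproductDisjoint {C : Type u} [Category.{v} C] (X₁ X₂ : C) where
  isInitialOfIsPullbackOfIsCoproduct :
    ∀ {X Z} {pX₁ : X₁ ⟶ X} {pX₂ : X₂ ⟶ X} {f : Z ⟶ X₁} {g : Z ⟶ X₂}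
      (_cX : IsColimit (BinaryCofan.mk pX₁ pX₂)) {comm : f ≫ pX₁ = g ≫ pX₂},
      IsLimit (PullbackCone.mk _ _ comm) → IsInitial Z
  mono_inl : ∀ (X) (X₁ : X₁ ⟶ X) (X₂ : X₂ ⟶ X) (_ : IsColimit (BinaryCofan.mk X₁ X₂)), Mono X₁
  mono_inr : ∀ (X) (X₁ : X₁ ⟶ X) (X₂ : X₂ ⟶ X) (_ : IsColimit (BinaryCofan.mk X₁ X₂)), Mono X₂

/-- The Mathlib (Dec 2024) notion: `C` has disjoint coproducts if every coproduct is disjoint. -/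
class CoproductsDisjoint (C : Type u) [Category.{v} C] where
  CoproductDisjoint : ∀ X Y : C, _root_.CoproductDisjoint X Y

variable (C : Type u) [Category.{v} C] [HasFiniteLimits C]

/-- An equivalence groupoid in `C`: a pair of objects with a monomorphism
`X₁ ⟶ X₀ ⨯ X₀` which is an internal equivalence relation. -/
structure EqGpd where
  X₀ : C
  X₁ : C
  d₀ : X₁ ⟶ X₀
  d₁ : X₁ ⟶ X₀
  mono : Mono (prod.lift d₀ d₁)
  refl : ∀ (T : C) (x : T ⟶ X₀), ∃ h : T ⟶ X₁, h ≫ d₀ = x ∧ h ≫ d₁ = x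
  symm : ∀ (T : C) (x y : T ⟶ X₀), (∃ h : T ⟶ X₁, h ≫ d₀ = x ∧ h ≫ d₁ = y) →
    ∃ h : T ⟶ X₁, h ≫ d₀ = y ∧ h ≫ d₁ = x
  trans : ∀ (T : C) (x y z : T ⟶ X₀),
    (∃ h : T ⟶ X₁, h ≫ d₀ = x ∧ h ≫ d₁ = y) →
    (∃ h : T ⟶ X₁, h ≫ d₀ = y ∧ h ≫ d₁ = z) →
    ∃ h : T ⟶ X₁, h ≫ d₀ = x ∧ h ≫ d₁ = z

namespace EqGpd

variable {C}

/-- A morphism of equivalence groupoids. -/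
@[ext]
structure Hom (A B : EqGpd C) where
  f₀ : A.X₀ ⟶ B.X₀
  f₁ : A.X₁ ⟶ B.X₁
  w₀ : f₁ ≫ B.d₀ = A.d₀ ≫ f₀
  w₁ : f₁ ≫ B.d₁ = A.d₁ ≫ f₀

instance : Category (EqGpd C) where
  Hom A B := Hom A B
  id A := ⟨𝟙 _, 𝟙 _, by simp, by simp⟩
  comp {A B D} f g := ⟨f.f₀ ≫ g.f₀, f.f₁ ≫ g.f₁,
    by rw [Category.assoc, g.w₀, ← Category.assoc, f.w₀, Category.assoc],
    by rw [Category.assoc, g.w₁, ← Category.assoc, f.w₁, Category.assoc]⟩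
  id_comp f := by apply Hom.ext <;> simp
  comp_id f := by apply Hom.ext <;> simp
  assoc f g h := by apply Hom.ext <;> simp

@[simp] lemma comp_f₀ {A B D : EqGpd C} (f : A ⟶ B) (g : B ⟶ D) :
    (f ≫ g).f₀ = f.f₀ ≫ g.f₀ := rfl

@[simp] lemma comp_f₁ {A B D : EqGpd C} (f : A ⟶ B) (g : B ⟶ D) :
    (f ≫ g).f₁ = f.f₁ ≫ g.f₁ := rfl

@[simp] lemma id_f₀ (A : EqGpd C) : (𝟙 A : A ⟶ A).f₀ = 𝟙 A.X₀ := rfl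

@[simp] lemma id_f₁ (A : EqGpd C) : (𝟙 A : A ⟶ A).f₁ = 𝟙 A.X₁ := rfl

/-- The homotopy relation on morphisms of equivalence groupoids. -/
def htpy : HomRel (EqGpd C) := fun {A B} f g =>
  ∃ h : A.X₀ ⟶ B.X₁, h ≫ B.d₀ = f.f₀ ∧ h ≫ B.d₁ = g.f₀

/-- The embedding of `C` into equivalence groupoids via diagonals. -/
def disc : C ⥤ EqGpd C where
  obj X :=
    { X₀ := X
      X₁ := X
      d₀ := 𝟙 X
      d₁ := 𝟙 X
      mono := ⟨fun {Z} g h w => by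
        have := congrArg (fun t => t ≫ (prod.fst : X ⨯ X ⟶ X)) w
        simp at this
        erw [prod.lift_fst, prod.lift_fst] at this
        exact this⟩
      refl := fun T x => ⟨x, by simp, by simp⟩
      symm := fun T x y ⟨h, h0, h1⟩ => ⟨h, by simpa using h1, by simpa using h0⟩
      trans := fun T x y z ⟨h, h0, h1⟩ ⟨k, k0, k1⟩ =>
        ⟨h, h0, by
          simp only [Category.comp_id] at h0 h1 k0 k1 ⊢
          rw [h1, ← k0]; exact k1⟩ }
  map {X Y} u := ⟨u, u, by simp, by simp⟩
  map_id X := by apply Hom.ext <;> simp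
  map_comp f g := by apply Hom.ext <;> simp

end EqGpd

/-- `f` is an effective epimorphism: it is the coequalizer of its kernel pair. -/
def IsEffectiveEpi {X Y : C} (f : X ⟶ Y) : Prop :=
  ∃ w : pullback.fst f f ≫ f = pullback.snd f f ≫ f,
    Nonempty (IsColimit (Cofork.ofπ f w))

set_option linter.unusedSectionVars false

namespace PretoposAux

variable {C}

theorem epi_of_cofork {K X Y : C} {a b : K ⟶ X} {q : X ⟶ Y} {w : a ≫ q = b ≫ q}
    (h : IsColimit (Cofork.ofπ q w)) : Epi q :=
  ⟨fun _ _ huv => Cofork.IsColimit.hom_ext h huv⟩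

theorem epi_of_effective {X Y : C} {f : X ⟶ Y} (h : IsEffectiveEpi C f) : Epi f := by
  obtain ⟨w, ⟨hc⟩⟩ := h; exact epi_of_cofork hc

theorem descend {T' T R Z : C} {τ : T' ⟶ T} (hτ : IsEffectiveEpi C τ)
    {φ : T' ⟶ R} {ι : R ⟶ Z} (hι : Mono ι) {ψ : T ⟶ Z} (hc : φ ≫ ι = τ ≫ ψ) :
    ∃ φ' : T ⟶ R, τ ≫ φ' = φ ∧ φ' ≫ ι = ψ := by
  obtain ⟨w, ⟨hcol⟩⟩ := hτ
  have he : Epi τ := epi_of_cofork hcol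
  have h1 : pullback.fst τ τ ≫ φ = pullback.snd τ τ ≫ φ := by
    rw [← cancel_mono ι]
    simp only [Category.assoc, hc]
    rw [← Category.assoc, ← Category.assoc, pullback.condition]
  refine ⟨Cofork.IsColimit.desc hcol φ h1, ?_, ?_⟩
  · exact Cofork.IsColimit.π_desc' hcol φ h1
  · have hfac : τ ≫ Cofork.IsColimit.desc hcol φ h1 = φ := Cofork.IsColimit.π_desc' hcol φ h1
    rw [← cancel_epi τ, ← Category.assoc, hfac, hc]

/-- The kernel pair of a morphism as an equivalence groupoid. -/
@[reducible] noncomputable def kerGpd {A B : C} (m : A ⟶ B) : EqGpd C where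
  X₀ := A
  X₁ := pullback m m
  d₀ := pullback.fst m m
  d₁ := pullback.snd m m
  mono := ⟨fun {Z} g h w => by
    apply pullback.hom_ext
    · have := congrArg (fun t => t ≫ (prod.fst : A ⨯ A ⟶ A)) w
      simpa [prod.lift_fst] using this
    · have := congrArg (fun t => t ≫ (prod.snd : A ⨯ A ⟶ A)) w
      simpa [prod.lift_snd] using this⟩
  refl := fun T x => ⟨pullback.lift x x rfl, by simp [pullback.lift_fst], by simp [pullback.lift_snd]⟩
  symm := fun T x y ⟨h, h0, h1⟩ => by
    have hxy : y ≫ m = x ≫ m := by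
      rw [← h0, ← h1, Category.assoc, Category.assoc, pullback.condition]
    exact ⟨pullback.lift y x hxy, by simp [pullback.lift_fst], by simp [pullback.lift_snd]⟩
  trans := fun T x y z ⟨h, h0, h1⟩ ⟨k, k0, k1⟩ => by
    have e1 : x ≫ m = y ≫ m := by
      rw [← h0, ← h1, Category.assoc, Category.assoc, pullback.condition]
    have e2 : y ≫ m = z ≫ m := by
      rw [← k0, ← k1, Category.assoc, Category.assoc, pullback.condition]
    exact ⟨pullback.lift x z (e1.trans e2), by simp [pullback.lift_fst], by simp [pullback.lift_snd]⟩

theorem image_fac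
    (heff : ∀ A : EqGpd C, ∃ (Q : C) (q : A.X₀ ⟶ Q) (w : A.d₀ ≫ q = A.d₁ ≫ q),
      Nonempty (IsColimit (Cofork.ofπ q w)) ∧ IsIso (pullback.lift A.d₀ A.d₁ w))
    (hstab : ∀ {X Y Z : C} (f : X ⟶ Y) (g : Z ⟶ Y),
      IsEffectiveEpi C f → IsEffectiveEpi C (pullback.snd f g))
    {A B : C} (m : A ⟶ B) :
    ∃ (I : C) (e : A ⟶ I) (i : I ⟶ B), IsEffectiveEpi C e ∧ Mono i ∧ e ≫ i = m := by
  obtain ⟨I, e, we, ⟨hcol⟩, -⟩ := heff (kerGpd m)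
  replace we : pullback.fst m m ≫ e = pullback.snd m m ≫ e := we
  replace hcol : IsColimit (Cofork.ofπ e we) := hcol
  -- `we : pullback.fst m m ≫ e = pullback.snd m m ≫ e`, `hcol` colimit of its cofork
  have hπ : pullback.fst m m ≫ m = pullback.snd m m ≫ m := pullback.condition
  set i : I ⟶ B := Cofork.IsColimit.desc hcol m hπ with hi
  have hei : e ≫ i = m := Cofork.IsColimit.π_desc' hcol m hπ
  -- e is an effective epi
  have heff_e : IsEffectiveEpi C e := by
    refine ⟨pullback.condition, ⟨Cofork.IsColimit.mk _ (fun s => Cofork.IsColimit.desc hcol s.π ?_)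
      (fun s => Cofork.IsColimit.π_desc' hcol s.π _) (fun s n hn => ?_)⟩⟩
    · have c1 := s.condition
      calc pullback.fst m m ≫ s.π
          = (pullback.lift (pullback.fst m m) (pullback.snd m m) we ≫ pullback.fst e e) ≫ s.π := by
            rw [pullback.lift_fst]
        _ = (pullback.lift (pullback.fst m m) (pullback.snd m m) we ≫ pullback.snd e e) ≫ s.π := by
            rw [Category.assoc, Category.assoc, c1]
        _ = pullback.snd m m ≫ s.π := by rw [pullback.lift_snd]
    · have he : Epi e := epi_of_cofork hcol
      have hn' : e ≫ n = s.π := hn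
      rw [← cancel_epi e, hn']
      exact (Cofork.IsColimit.π_desc' hcol s.π _).symm
  have he : Epi e := epi_of_cofork hcol
  refine ⟨I, e, i, heff_e, ⟨fun {T} u v huv => ?_⟩, hei⟩
  -- Mono i
  obtain ⟨w1, ⟨hc1⟩⟩ := hstab e u heff_e
  set τ₁ : pullback e u ⟶ T := pullback.snd e u
  set a : pullback e u ⟶ A := pullback.fst e u
  have ha : a ≫ e = τ₁ ≫ u := pullback.condition
  obtain ⟨w2, ⟨hc2⟩⟩ := hstab e (τ₁ ≫ v) heff_e
  set τ₂ : pullback e (τ₁ ≫ v) ⟶ pullback e u := pullback.snd e (τ₁ ≫ v)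
  set b : pullback e (τ₁ ≫ v) ⟶ A := pullback.fst e (τ₁ ≫ v)
  have hb : b ≫ e = τ₂ ≫ τ₁ ≫ v := pullback.condition
  have hm : (τ₂ ≫ a) ≫ m = b ≫ m := by
    rw [← hei, ← Category.assoc ((τ₂ ≫ a)), Category.assoc τ₂ a e, ha, ← Category.assoc b, hb]
    simp only [Category.assoc, huv]
  have key : (τ₂ ≫ a) ≫ e = b ≫ e := by
    have := congrArg (fun t => t ≫ e) (pullback.lift_fst (τ₂ ≫ a) b hm)
    have h2 := congrArg (fun t => t ≫ e) (pullback.lift_snd (τ₂ ≫ a) b hm)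
    dsimp at this h2
    rw [← this, ← h2, Category.assoc, Category.assoc, we]
  have hτ1 : Epi τ₁ := epi_of_cofork hc1
  have hτ2 : Epi τ₂ := epi_of_cofork hc2
  rw [Category.assoc, ha, hb] at key
  rw [← Category.assoc] at key
  exact (cancel_epi τ₁).1 ((cancel_epi τ₂).1 (by simpa using key))

theorem sigma_decompose [∀ J' : Type v, HasColimitsOfShape (Discrete J') C]
    (huniv : ∀ {J' : Type v} (F : Discrete J' ⥤ C) (c : Cocone F),
      IsColimit c → IsUniversalColimit c)
    {J : Type v} (Fm : J → C) {T : C} (t : T ⟶ ∐ Fm) :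
    ∃ (P : J → C) (p : ∀ j, P j ⟶ T) (q : ∀ j, P j ⟶ Fm j),
      (∀ j, q j ≫ Sigma.ι Fm j = p j ≫ t) ∧
      (∀ (Z : C) (k : ∀ j, P j ⟶ Z), ∃ z : T ⟶ Z, ∀ j, p j ≫ z = k j) ∧
      (∀ (Z : C) (z₁ z₂ : T ⟶ Z), (∀ j, p j ≫ z₁ = p j ≫ z₂) → z₁ = z₂) := by
  let P : J → C := fun j => pullback (Sigma.ι Fm j) t
  let p : ∀ j, P j ⟶ T := fun j => pullback.snd _ _
  let q : ∀ j, P j ⟶ Fm j := fun j => pullback.fst _ _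
  have hcomm : ∀ j, q j ≫ Sigma.ι Fm j = p j ≫ t := fun j => pullback.condition
  let c' : Cocone (Discrete.functor P) := Cofan.mk T p
  let α : Discrete.functor P ⟶ Discrete.functor Fm := Discrete.natTrans (fun j => q j.as)
  have hsq : α ≫ (colimit.cocone (Discrete.functor Fm)).ι =
      c'.ι ≫ (Functor.const _).map t := by
    ext ⟨j⟩
    exact hcomm j
  have hpb : ∀ j : Discrete J, IsPullback (c'.ι.app j) (α.app j) t
      ((colimit.cocone (Discrete.functor Fm)).ι.app j) := by
    rintro ⟨j⟩
    exact (IsPullback.of_hasPullback (Sigma.ι Fm j) t).flip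
  obtain ⟨hc'⟩ := huniv (Discrete.functor Fm) (colimit.cocone _) (colimit.isColimit _)
    c' α t hsq (NatTrans.equifibered_of_discrete α) hpb
  refine ⟨P, p, q, hcomm, ?_, ?_⟩
  · intro Z k
    exact ⟨hc'.desc (Cofan.mk Z k), fun j => hc'.fac (Cofan.mk Z k) ⟨j⟩⟩
  · intro Z z₁ z₂ h
    exact hc'.hom_ext (fun ⟨j⟩ => h j)

/-- Chains of composable relation steps. -/
structure Chain (Y : C) where
  obj : C
  s : obj ⟶ Y
  t : obj ⟶ Y

variable {Y S : C}

/-- Iterated relation composition: zigzag objects. -/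
@[reducible] noncomputable def chains (Y S : C) (sS tS : S ⟶ Y) : ℕ → Chain Y
  | 0 => ⟨Y, 𝟙 Y, 𝟙 Y⟩
  | n+1 =>
    let c := chains Y S sS tS n
    ⟨pullback c.t sS, pullback.fst c.t sS ≫ c.s, pullback.snd c.t sS ≫ tS⟩

theorem chains_cast (sS tS : S ⟶ Y) {a b : ℕ} (h : a = b) :
    ∃ c : (chains Y S sS tS a).obj ⟶ (chains Y S sS tS b).obj,
      c ≫ (chains Y S sS tS b).s = (chains Y S sS tS a).s ∧
      c ≫ (chains Y S sS tS b).t = (chains Y S sS tS a).t := by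
  subst h; exact ⟨𝟙 _, by simp, by simp⟩

lemma chains_zero_obj (sS tS : S ⟶ Y) : (chains Y S sS tS 0).obj = Y := rfl
lemma chains_zero_s (sS tS : S ⟶ Y) : (chains Y S sS tS 0).s = 𝟙 Y := rfl
lemma chains_zero_t (sS tS : S ⟶ Y) : (chains Y S sS tS 0).t = 𝟙 Y := rfl
lemma chains_succ_obj (sS tS : S ⟶ Y) (n : ℕ) :
    (chains Y S sS tS (n+1)).obj = pullback (chains Y S sS tS n).t sS := rfl
lemma chains_succ_s (sS tS : S ⟶ Y) (n : ℕ) :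
    (chains Y S sS tS (n+1)).s
      = pullback.fst (chains Y S sS tS n).t sS ≫ (chains Y S sS tS n).s := rfl
lemma chains_succ_t (sS tS : S ⟶ Y) (n : ℕ) :
    (chains Y S sS tS (n+1)).t = pullback.snd (chains Y S sS tS n).t sS ≫ tS := rfl

theorem gam (sS tS : S ⟶ Y) (n : ℕ) : ∀ m : ℕ,
    ∃ g : pullback (chains Y S sS tS n).t (chains Y S sS tS m).s ⟶
        (chains Y S sS tS (n+m)).obj,
      g ≫ (chains Y S sS tS (n+m)).s = pullback.fst _ _ ≫ (chains Y S sS tS n).s ∧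
      g ≫ (chains Y S sS tS (n+m)).t = pullback.snd _ _ ≫ (chains Y S sS tS m).t := by
  intro m
  induction m with
  | zero =>
    refine ⟨pullback.fst _ _, rfl, ?_⟩
    show pullback.fst (chains Y S sS tS n).t (chains Y S sS tS 0).s
        ≫ (chains Y S sS tS n).t = _
    rw [pullback.condition, chains_zero_s, chains_zero_t]
  | succ m ih =>
    obtain ⟨g, hgs, hgt⟩ := ih
    have h1 : pullback.fst (chains Y S sS tS n).t (chains Y S sS tS (m+1)).s
          ≫ (chains Y S sS tS n).t
        = (pullback.snd (chains Y S sS tS n).t (chains Y S sS tS (m+1)).s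
            ≫ pullback.fst (chains Y S sS tS m).t sS) ≫ (chains Y S sS tS m).s := by
      rw [pullback.condition]; exact (Category.assoc _ _ _).symm
    have h2 : (pullback.lift _ _ h1 ≫ g) ≫ (chains Y S sS tS (n+m)).t =
        (pullback.snd (chains Y S sS tS n).t (chains Y S sS tS (m+1)).s
          ≫ pullback.snd (chains Y S sS tS m).t sS) ≫ sS := by
      rw [Category.assoc, hgt, ← Category.assoc, pullback.lift_snd,
        Category.assoc, pullback.condition, Category.assoc]
    refine ⟨pullback.lift _ _ h2, ?_, ?_⟩
    · show pullback.lift _ _ h2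
          ≫ (pullback.fst (chains Y S sS tS (n+m)).t sS ≫ (chains Y S sS tS (n+m)).s)
        = pullback.fst (chains Y S sS tS n).t (chains Y S sS tS (m+1)).s
          ≫ (chains Y S sS tS n).s
      rw [← Category.assoc, pullback.lift_fst, Category.assoc, hgs,
        ← Category.assoc, pullback.lift_fst]
    · show pullback.lift _ _ h2
          ≫ (pullback.snd (chains Y S sS tS (n+m)).t sS ≫ tS)
        = pullback.snd (chains Y S sS tS n).t (chains Y S sS tS (m+1)).s
          ≫ (pullback.snd (chains Y S sS tS m).t sS ≫ tS)
      rw [← Category.assoc, pullback.lift_snd, Category.assoc]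

theorem rho (sS tS : S ⟶ Y) (σ : S ⟶ S) (hσs : σ ≫ sS = tS) (hσt : σ ≫ tS = sS) :
    ∀ n : ℕ, ∃ r : (chains Y S sS tS n).obj ⟶ (chains Y S sS tS n).obj,
      r ≫ (chains Y S sS tS n).s = (chains Y S sS tS n).t ∧
      r ≫ (chains Y S sS tS n).t = (chains Y S sS tS n).s := by
  intro n
  induction n with
  | zero =>
    exact ⟨𝟙 _, by show 𝟙 Y ≫ 𝟙 Y = 𝟙 Y; simp, by show 𝟙 Y ≫ 𝟙 Y = 𝟙 Y; simp⟩
  | succ n ih =>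
    obtain ⟨r, hrs, hrt⟩ := ih
    have hβc : (pullback.snd (chains Y S sS tS n).t sS ≫ σ ≫ sS) ≫ (chains Y S sS tS 0).t =
        (pullback.snd (chains Y S sS tS n).t sS ≫ σ) ≫ sS := by
      show (pullback.snd (chains Y S sS tS n).t sS ≫ σ ≫ sS) ≫ 𝟙 Y = _
      rw [Category.comp_id, Category.assoc]
    have hβs : pullback.lift _ _ hβc ≫ (chains Y S sS tS 1).s =
        pullback.snd (chains Y S sS tS n).t sS ≫ tS := by
      simp only [chains]
      rw [← Category.assoc, pullback.lift_fst]
      simp [hσs]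
    have hβt : pullback.lift _ _ hβc ≫ (chains Y S sS tS 1).t =
        pullback.fst (chains Y S sS tS n).t sS ≫ (chains Y S sS tS n).t := by
      simp only [chains]
      rw [← Category.assoc, pullback.lift_snd, Category.assoc, hσt, ← pullback.condition]
    have hδc : pullback.lift _ _ hβc ≫ (chains Y S sS tS 1).t =
        (pullback.fst (chains Y S sS tS n).t sS ≫ r) ≫ (chains Y S sS tS n).s := by
      rw [hβt, Category.assoc, hrs]
    obtain ⟨g, hgs, hgt⟩ := gam sS tS 1 n
    obtain ⟨cst, hcs, hct⟩ := chains_cast sS tS (Nat.add_comm 1 n)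
    refine ⟨pullback.lift _ _ hδc ≫ g ≫ cst, ?_, ?_⟩
    · rw [Category.assoc, Category.assoc, hcs, hgs, ← Category.assoc, pullback.lift_fst,
        hβs, chains_succ_t]
    · rw [Category.assoc, Category.assoc, hct, hgt, ← Category.assoc, pullback.lift_snd,
        Category.assoc, hrt, chains_succ_s]

variable {X : C}

/-- The index family for the one-step relation generated by `f` and `g`:
a symmetric reflexive span. -/
@[reducible] def Fam (X Y : C) : Option (ULift.{v} Bool) → C := fun o =>
  match o with
  | none => Y
  | some _ => X

def sfun (f g : X ⟶ Y) : ∀ o, Fam X Y o ⟶ Y := fun o =>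
  match o with
  | none => 𝟙 Y
  | some b => if b.down then g else f

def tfun (f g : X ⟶ Y) : ∀ o, Fam X Y o ⟶ Y := fun o =>
  match o with
  | none => 𝟙 Y
  | some b => if b.down then f else g

set_option maxHeartbeats 2000000 in
set_option synthInstance.maxHeartbeats 1000000 in
theorem hasCoeq [∀ J' : Type v, HasColimitsOfShape (Discrete J') C]
    (huniv : ∀ {J' : Type v} (F : Discrete J' ⥤ C) (c : Cocone F),
      IsColimit c → IsUniversalColimit c)
    (heff : ∀ A : EqGpd C, ∃ (Q : C) (q : A.X₀ ⟶ Q) (w : A.d₀ ≫ q = A.d₁ ≫ q),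
      Nonempty (IsColimit (Cofork.ofπ q w)) ∧ IsIso (pullback.lift A.d₀ A.d₁ w))
    (hstab : ∀ {X Y Z : C} (f : X ⟶ Y) (g : Z ⟶ Y),
      IsEffectiveEpi C f → IsEffectiveEpi C (pullback.snd f g))
    (f g : X ⟶ Y) :
    ∃ (Q : C) (q : Y ⟶ Q) (w : f ≫ q = g ≫ q), Nonempty (IsColimit (Cofork.ofπ q w)) := by
  classical
  set S : C := ∐ (Fam X Y) with hS
  set sS : S ⟶ Y := Sigma.desc (sfun f g) with hsS
  set tS : S ⟶ Y := Sigma.desc (tfun f g) with htS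
  set σ : S ⟶ S := Sigma.desc (fun o =>
    match o with
    | none => Sigma.ι (Fam X Y) none
    | some b => Sigma.ι (Fam X Y) (some ⟨!b.down⟩)) with hσ
  have hσs : σ ≫ sS = tS := by
    apply Sigma.hom_ext
    rintro (_ | ⟨(_|_)⟩) <;> simp [hσ, hsS, htS, sfun, tfun]
  have hσt : σ ≫ tS = sS := by
    apply Sigma.hom_ext
    rintro (_ | ⟨(_|_)⟩) <;> simp [hσ, hsS, htS, sfun, tfun]
  -- the chain objects and their coproduct
  set ch := chains Y S sS tS with hch
  set Fm : ULift.{v} ℕ → C := fun j => (ch j.down).obj with hFm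
  set W : C := ∐ Fm with hW
  set wS : W ⟶ Y := Sigma.desc (fun j => (ch j.down).s) with hwS
  set wT : W ⟶ Y := Sigma.desc (fun j => (ch j.down).t) with hwT
  have hιS : ∀ j : ULift.{v} ℕ, Sigma.ι Fm j ≫ wS = (ch j.down).s := fun j => by
    simp [hwS]
  have hιT : ∀ j : ULift.{v} ℕ, Sigma.ι Fm j ≫ wT = (ch j.down).t := fun j => by
    simp [hwT]
  set w : W ⟶ Y ⨯ Y := prod.lift wS wT with hw
  -- image factorization of w
  obtain ⟨R, e, i, he, hmono, hei⟩ := image_fac heff hstab w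
  have hee : Epi e := epi_of_effective he
  set d₀ : R ⟶ Y := i ≫ prod.fst with hd₀
  set d₁ : R ⟶ Y := i ≫ prod.snd with hd₁
  have hed₀ : e ≫ d₀ = wS := by rw [hd₀, ← Category.assoc, hei, hw, prod.lift_fst]
  have hed₁ : e ≫ d₁ = wT := by rw [hd₁, ← Category.assoc, hei, hw, prod.lift_snd]
  have prodlem : ∀ {T' : C} (a : T' ⟶ R) (b : T' ⟶ Y ⨯ Y),
      a ≫ d₀ = b ≫ prod.fst → a ≫ d₁ = b ≫ prod.snd → a ≫ i = b := by
    intro T' a b hb0 hb1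
    apply Limits.prod.hom_ext
    · rw [Category.assoc, ← hd₀, hb0]
    · rw [Category.assoc, ← hd₁, hb1]
  -- points of chains give points of R
  set pt : ∀ j : ULift.{v} ℕ, (ch j.down).obj ⟶ R := fun j => Sigma.ι Fm j ≫ e with hpt
  have hpt₀ : ∀ j, pt j ≫ d₀ = (ch j.down).s := fun j => by
    rw [hpt, Category.assoc, hed₀, hιS]
  have hpt₁ : ∀ j, pt j ≫ d₁ = (ch j.down).t := fun j => by
    rw [hpt, Category.assoc, hed₁, hιT]
  -- key concatenation lemma
  have concat : ∀ (T : C) (u v : T ⟶ W), u ≫ wT = v ≫ wS →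
      ∃ φ : T ⟶ R, φ ≫ d₀ = u ≫ wS ∧ φ ≫ d₁ = v ≫ wT := by
    intro T u v huv
    obtain ⟨P, p, q, hpq, hdesc, hext⟩ := sigma_decompose huniv Fm u
    set ψ : T ⟶ Y ⨯ Y := prod.lift (u ≫ wS) (v ≫ wT) with hψ
    -- for each outer index j, decompose further along v
    have inner : ∀ j : ULift.{v} ℕ, ∃ Φ : P j ⟶ R, Φ ≫ i = p j ≫ ψ := by
      intro j
      obtain ⟨P', p', q', hpq', hdesc', hext'⟩ := sigma_decompose huniv Fm (p j ≫ v)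
      have hstep : ∀ j' : ULift.{v} ℕ, ∃ φ : P' j' ⟶ R, φ ≫ i = p' j' ≫ p j ≫ ψ := by
        intro j'
        obtain ⟨gm, hgs, hgt⟩ := gam sS tS j.down j'.down
        have hcond : (p' j' ≫ q j) ≫ (ch j.down).t = q' j' ≫ (ch j'.down).s := by
          calc (p' j' ≫ q j) ≫ (ch j.down).t
              = p' j' ≫ q j ≫ Sigma.ι Fm j ≫ wT := by
                rw [hιT j, Category.assoc]
            _ = p' j' ≫ (p j ≫ u) ≫ wT := by
                rw [← hpq j]; simp only [Category.assoc]
            _ = (p' j' ≫ p j ≫ v) ≫ wS := by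
                simp only [Category.assoc]; rw [huv]
            _ = (q' j' ≫ Sigma.ι Fm j') ≫ wS := by rw [hpq' j']
            _ = q' j' ≫ (ch j'.down).s := by rw [Category.assoc, hιS j']
        refine ⟨pullback.lift _ _ hcond ≫ gm ≫ pt ⟨j.down + j'.down⟩, prodlem _ _ ?_ ?_⟩
        · calc (pullback.lift _ _ hcond ≫ gm ≫ pt ⟨j.down + j'.down⟩) ≫ d₀
              = pullback.lift _ _ hcond ≫ gm ≫ (ch (j.down + j'.down)).s := by
                rw [← hpt₀ ⟨j.down + j'.down⟩]; simp only [Category.assoc]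
            _ = (p' j' ≫ q j) ≫ (ch j.down).s := by
                rw [hgs, ← Category.assoc, pullback.lift_fst]
            _ = p' j' ≫ q j ≫ Sigma.ι Fm j ≫ wS := by
                rw [hιS j, Category.assoc]
            _ = p' j' ≫ (p j ≫ u) ≫ wS := by
                rw [← hpq j]; simp only [Category.assoc]
            _ = (p' j' ≫ p j ≫ ψ) ≫ prod.fst := by
                rw [hψ]; simp only [Category.assoc, prod.lift_fst]
        · calc (pullback.lift _ _ hcond ≫ gm ≫ pt ⟨j.down + j'.down⟩) ≫ d₁
              = pullback.lift _ _ hcond ≫ gm ≫ (ch (j.down + j'.down)).t := by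
                rw [← hpt₁ ⟨j.down + j'.down⟩]; simp only [Category.assoc]
            _ = (q' j') ≫ (ch j'.down).t := by
                rw [hgt, ← Category.assoc, pullback.lift_snd]
            _ = q' j' ≫ Sigma.ι Fm j' ≫ wT := by
                rw [hιT j']
            _ = (p' j' ≫ p j ≫ v) ≫ wT := by
                rw [← hpq' j']; simp only [Category.assoc]
            _ = (p' j' ≫ p j ≫ ψ) ≫ prod.snd := by
                rw [hψ]; simp only [Category.assoc, prod.lift_snd]
      choose φs hφs using hstep
      obtain ⟨Φ, hΦ⟩ := hdesc' R φs
      refine ⟨Φ, hext' _ _ _ fun j' => ?_⟩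
      rw [← Category.assoc, hΦ j', hφs j']
    choose Φs hΦs using inner
    obtain ⟨Φ, hΦ⟩ := hdesc R Φs
    have hΦi : Φ ≫ i = ψ := by
      apply hext
      intro j
      rw [← Category.assoc, hΦ j, hΦs j]
    refine ⟨Φ, ?_, ?_⟩
    · rw [hd₀, ← Category.assoc, hΦi, hψ, prod.lift_fst]
    · rw [hd₁, ← Category.assoc, hΦi, hψ, prod.lift_snd]
  choose rv hrv1 hrv2 using rho sS tS σ hσs hσt
  -- the equivalence groupoid structure on R
  have hmono' : Mono (prod.lift d₀ d₁) := by
    have : prod.lift d₀ d₁ = i := by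
      apply Limits.prod.hom_ext <;> simp [hd₀, hd₁, prod.lift_fst, prod.lift_snd]
    rw [this]; exact hmono
  have hrefl : ∀ (T : C) (x : T ⟶ Y), ∃ h : T ⟶ R, h ≫ d₀ = x ∧ h ≫ d₁ = x := by
    intro T x
    refine ⟨x ≫ pt ⟨0⟩, ?_, ?_⟩
    · rw [Category.assoc, hpt₀, chains_zero_s, Category.comp_id]
    · rw [Category.assoc, hpt₁, chains_zero_t, Category.comp_id]
  have hsymm : ∀ (T : C) (x y : T ⟶ Y), (∃ h : T ⟶ R, h ≫ d₀ = x ∧ h ≫ d₁ = y) →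
      ∃ h : T ⟶ R, h ≫ d₀ = y ∧ h ≫ d₁ = x := by
    rintro T x y ⟨h, h0, h1⟩
    obtain ⟨w1, ⟨hc1⟩⟩ := hstab e h he
    have hτ : IsEffectiveEpi C (pullback.snd e h) := ⟨w1, ⟨hc1⟩⟩
    have hu : pullback.fst e h ≫ e = pullback.snd e h ≫ h := pullback.condition
    obtain ⟨P, p, q, hpq, hdesc, hext⟩ := sigma_decompose huniv Fm (pullback.fst e h)
    have hstep : ∀ j, (q j ≫ rv j.down ≫ pt j) ≫ i =
        p j ≫ pullback.snd e h ≫ prod.lift y x := by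
      intro j
      refine prodlem _ _ ?_ ?_
      · calc (q j ≫ rv j.down ≫ pt j) ≫ d₀
            = q j ≫ rv j.down ≫ (ch j.down).s := by
              rw [← hpt₀ j]; simp only [Category.assoc]
          _ = q j ≫ Sigma.ι Fm j ≫ wT := by rw [hrv1, hιT]
          _ = (p j ≫ pullback.fst e h) ≫ wT := by
              rw [← hpq j]; simp only [Category.assoc]
          _ = p j ≫ pullback.fst e h ≫ e ≫ d₁ := by
              rw [hed₁]; simp only [Category.assoc]
          _ = p j ≫ pullback.snd e h ≫ h ≫ d₁ := by
              rw [← Category.assoc (pullback.fst e h), hu]; simp only [Category.assoc]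
          _ = (p j ≫ pullback.snd e h ≫ prod.lift y x) ≫ prod.fst := by
              rw [h1]; simp only [Category.assoc, prod.lift_fst]
      · calc (q j ≫ rv j.down ≫ pt j) ≫ d₁
            = q j ≫ rv j.down ≫ (ch j.down).t := by
              rw [← hpt₁ j]; simp only [Category.assoc]
          _ = q j ≫ Sigma.ι Fm j ≫ wS := by rw [hrv2, hιS]
          _ = (p j ≫ pullback.fst e h) ≫ wS := by
              rw [← hpq j]; simp only [Category.assoc]
          _ = p j ≫ pullback.fst e h ≫ e ≫ d₀ := by
              rw [hed₀]; simp only [Category.assoc]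
          _ = p j ≫ pullback.snd e h ≫ h ≫ d₀ := by
              rw [← Category.assoc (pullback.fst e h), hu]; simp only [Category.assoc]
          _ = (p j ≫ pullback.snd e h ≫ prod.lift y x) ≫ prod.snd := by
              rw [h0]; simp only [Category.assoc, prod.lift_snd]
    obtain ⟨z, hz⟩ := hdesc R (fun j => q j ≫ rv j.down ≫ pt j)
    have hzi : z ≫ i = pullback.snd e h ≫ prod.lift y x := by
      apply hext
      intro j
      rw [← Category.assoc, hz j, hstep j]
    obtain ⟨φ', -, hφ'⟩ := descend hτ hmono hzi
    refine ⟨φ', ?_, ?_⟩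
    · rw [hd₀, ← Category.assoc, hφ', prod.lift_fst]
    · rw [hd₁, ← Category.assoc, hφ', prod.lift_snd]
  have htrans : ∀ (T : C) (x y z : T ⟶ Y),
      (∃ h : T ⟶ R, h ≫ d₀ = x ∧ h ≫ d₁ = y) →
      (∃ h : T ⟶ R, h ≫ d₀ = y ∧ h ≫ d₁ = z) →
      ∃ h : T ⟶ R, h ≫ d₀ = x ∧ h ≫ d₁ = z := by
    rintro T x y z ⟨h₁, h10, h11⟩ ⟨h₂, h20, h21⟩
    obtain ⟨wa, ⟨hca⟩⟩ := hstab e h₁ he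
    have hτ₁ : IsEffectiveEpi C (pullback.snd e h₁) := ⟨wa, ⟨hca⟩⟩
    have hu₁ : pullback.fst e h₁ ≫ e = pullback.snd e h₁ ≫ h₁ := pullback.condition
    obtain ⟨wb, ⟨hcb⟩⟩ := hstab e (pullback.snd e h₁ ≫ h₂) he
    have hτ₂ : IsEffectiveEpi C (pullback.snd e (pullback.snd e h₁ ≫ h₂)) := ⟨wb, ⟨hcb⟩⟩
    set τ₁ := pullback.snd e h₁
    set τ₂ := pullback.snd e (τ₁ ≫ h₂)
    set u₁ := pullback.fst e h₁
    set u₂ := pullback.fst e (τ₁ ≫ h₂)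
    have hu₂ : u₂ ≫ e = τ₂ ≫ τ₁ ≫ h₂ := pullback.condition
    have huv : (τ₂ ≫ u₁) ≫ wT = u₂ ≫ wS := by
      calc (τ₂ ≫ u₁) ≫ wT = τ₂ ≫ u₁ ≫ e ≫ d₁ := by
            rw [hed₁]; simp only [Category.assoc]
        _ = τ₂ ≫ τ₁ ≫ h₁ ≫ d₁ := by
            rw [← Category.assoc u₁, hu₁]; simp only [Category.assoc]
        _ = τ₂ ≫ τ₁ ≫ h₂ ≫ d₀ := by rw [h11, h20]
        _ = u₂ ≫ e ≫ d₀ := by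
            simp only [← Category.assoc]; rw [hu₂]; simp only [Category.assoc]
        _ = u₂ ≫ wS := by rw [hed₀]
    obtain ⟨Φ, hΦ0, hΦ1⟩ := concat _ (τ₂ ≫ u₁) u₂ huv
    have hΦi : Φ ≫ i = τ₂ ≫ τ₁ ≫ prod.lift x z := by
      refine prodlem _ _ ?_ ?_
      · calc Φ ≫ d₀ = (τ₂ ≫ u₁) ≫ wS := hΦ0
          _ = τ₂ ≫ u₁ ≫ e ≫ d₀ := by rw [hed₀]; simp only [Category.assoc]
          _ = τ₂ ≫ τ₁ ≫ h₁ ≫ d₀ := by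
              rw [← Category.assoc u₁, hu₁]; simp only [Category.assoc]
          _ = (τ₂ ≫ τ₁ ≫ prod.lift x z) ≫ prod.fst := by
              rw [h10]; simp only [Category.assoc, prod.lift_fst]
      · calc Φ ≫ d₁ = u₂ ≫ wT := hΦ1
          _ = u₂ ≫ e ≫ d₁ := by rw [hed₁]
          _ = τ₂ ≫ τ₁ ≫ h₂ ≫ d₁ := by rw [← Category.assoc u₂, hu₂]; simp only [Category.assoc]
          _ = (τ₂ ≫ τ₁ ≫ prod.lift x z) ≫ prod.snd := by
              rw [h21]; simp only [Category.assoc, prod.lift_snd]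
    obtain ⟨φ₂, -, hφ₂⟩ := descend hτ₂ hmono hΦi
    obtain ⟨φ₃, -, hφ₃⟩ := descend hτ₁ hmono hφ₂
    refine ⟨φ₃, ?_, ?_⟩
    · rw [hd₀, ← Category.assoc, hφ₃, prod.lift_fst]
    · rw [hd₁, ← Category.assoc, hφ₃, prod.lift_snd]
  -- apply effectivity of equivalence relations
  obtain ⟨Q, qm, wq, ⟨hcolim⟩, -⟩ := heff
    { X₀ := Y
      X₁ := R
      d₀ := d₀
      d₁ := d₁
      mono := hmono'
      refl := hrefl
      symm := hsymm
      trans := htrans }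
  replace wq : d₀ ≫ qm = d₁ ≫ qm := wq
  replace hcolim : IsColimit (Cofork.ofπ qm wq) := hcolim
  have hq : Epi qm := epi_of_cofork hcolim
  -- the pair (f,g) is a point of R
  have hx : f ≫ (ch 0).t = Sigma.ι (Fam X Y) (some ⟨false⟩) ≫ sS := by
    show f ≫ 𝟙 Y = _
    rw [Category.comp_id, hsS]
    simp [sfun]
  have hk0 : pullback.lift _ _ hx ≫ (ch 1).s = f := by
    show pullback.lift _ _ hx ≫ (pullback.fst (ch 0).t sS ≫ (ch 0).s) = f
    rw [← Category.assoc, pullback.lift_fst]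
    show f ≫ 𝟙 Y = f
    simp
  have hk1 : pullback.lift _ _ hx ≫ (ch 1).t = g := by
    show pullback.lift _ _ hx ≫ (pullback.snd (ch 0).t sS ≫ tS) = g
    rw [← Category.assoc, pullback.lift_snd, htS]
    simp [tfun]
  have wf : f ≫ qm = g ≫ qm := by
    have e0 : (pullback.lift _ _ hx ≫ pt ⟨1⟩) ≫ d₀ = f := by
      rw [Category.assoc, hpt₀, hk0]
    have e1 : (pullback.lift _ _ hx ≫ pt ⟨1⟩) ≫ d₁ = g := by
      rw [Category.assoc, hpt₁, hk1]
    rw [← e0, ← e1]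
    simp only [Category.assoc]
    rw [wq]
  -- any cofork on (f, g) coequalizes (d₀, d₁)
  have hfS : ∀ s : Cofork f g, sS ≫ s.π = tS ≫ s.π := by
    intro s
    apply Sigma.hom_ext
    rintro (_ | ⟨(_|_)⟩) <;>
      simp [hsS, htS, sfun, tfun, s.condition]
  have hchain : ∀ (s : Cofork f g) (n : ℕ), (ch n).s ≫ s.π = (ch n).t ≫ s.π := by
    intro s n
    induction n with
    | zero => rw [chains_zero_s, chains_zero_t]
    | succ n ih =>
      show (pullback.fst (ch n).t sS ≫ (ch n).s) ≫ s.π = (pullback.snd (ch n).t sS ≫ tS) ≫ s.π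
      rw [Category.assoc, ih, ← Category.assoc, pullback.condition,
        Category.assoc, Category.assoc, hfS]
  have hde : ∀ s : Cofork f g, d₀ ≫ s.π = d₁ ≫ s.π := by
    intro s
    rw [← cancel_epi e, ← Category.assoc, hed₀, ← Category.assoc, hed₁]
    apply Sigma.hom_ext
    intro j
    rw [← Category.assoc, hιS j, ← Category.assoc, hιT j, hchain]
  refine ⟨Q, qm, wf, ⟨Cofork.IsColimit.mk _
    (fun s => Cofork.IsColimit.desc hcolim s.π (hde s))
    (fun s => Cofork.IsColimit.π_desc' hcolim s.π (hde s))
    (fun s n hn => ?_)⟩⟩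
  have hn' : qm ≫ n = s.π := hn
  have hfac : qm ≫ Cofork.IsColimit.desc hcolim s.π (hde s) = s.π :=
    Cofork.IsColimit.π_desc' hcolim s.π (hde s)
  rw [← cancel_epi qm, hn', hfac]

end PretoposAux

/-- an infinitary pretopos (finite limits, small disjoint universal
coproducts, effective equivalence relations, pullback-stable effective epimorphisms)
has all small colimits. -/
theorem hasColimits_of_infinitary_pretopos
    [∀ J : Type v, HasColimitsOfShape (Discrete J) C]
    (hdisj : Nonempty (CoproductsDisjoint C))
    (huniv : ∀ {J : Type v} (F : Discrete J ⥤ C) (c : Cocone F),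
      IsColimit c → IsUniversalColimit c)
    (heff : ∀ A : EqGpd C, ∃ (Q : C) (q : A.X₀ ⟶ Q) (w : A.d₀ ≫ q = A.d₁ ≫ q),
      Nonempty (IsColimit (Cofork.ofπ q w)) ∧ IsIso (pullback.lift A.d₀ A.d₁ w))
    (hstab : ∀ {X Y Z : C} (f : X ⟶ Y) (g : Z ⟶ Y),
      IsEffectiveEpi C f → IsEffectiveEpi C (pullback.snd f g)) :
    HasColimits C := by
  have hpp : ∀ {A B : C} (f g : A ⟶ B), HasColimit (parallelPair f g) := by
    intro A B f g
    obtain ⟨Q, q, w, ⟨hc⟩⟩ := PretoposAux.hasCoeq huniv heff hstab f g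
    exact HasColimit.mk ⟨Cofork.ofπ q w, hc⟩
  have hce : HasCoequalizers C := by
    constructor
    intro F
    haveI := hpp (F.map WalkingParallelPairHom.left) (F.map WalkingParallelPairHom.right)
    exact hasColimit_of_iso (diagramIsoParallelPair F)
  have hco : HasCoproducts.{v} C := fun J => inferInstance
  exact has_colimits_of_hasCoequalizers_and_coproducts
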